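/- Let D ⊆ (ℕ⁺)ⁿ be non-empty. Then there exists a unique tuple γ ∈ (ℕ⁺)ⁿ such that for every prime p, the exponent vector (v_p(γ₁),…,v_p(γₙ)) is the lexicographic minimum of the set {(v_p(d₁),…,v_p(dₙ)) : d̄ ∈ D} ⊆ ℕⁿ. Moreover, σ(γ) = ⋂_{d̄ ∈ D} σ(d̄). -/

import Mathlib

open FirstOrder Language

/-- The language `L` with one binary function symbol `·` and one constant symbol `1`. -/
def L : FirstOrder.Language :=
  ⟨fun n => match n with | 0 => Unit | 2 => Unit | _ => Empty, fun _ => Empty⟩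

/-- Any monoid is an `L`-structure, with `·` interpreted as multiplication and `1` as the
identity. In particular `ℕ+` is the standard model of Skolem arithmetic, and
`Multiplicative ℕ` is the additive `L`-structure `(ℕ, +, 0)`. -/
instance (M : Type*) [Monoid M] : L.Structure M where
  funMap {n} f x :=
    match n, f, x with
    | 0, _, _ => 1
    | 2, _, x => x 0 * x 1
  RelMap r _ := r.elim

/-- The support of a tuple: the set of primes dividing some component. -/
def PSupp {n : ℕ} (a : Fin n → ℕ+) : Set ℕ := {p | p.Prime ∧ ∃ i, p ∣ (a i : ℕ)}

/-- For every non-empty `D ⊆ (ℕ⁺)ⁿ` there is a unique tuple `γ` whose exponent vector at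
every prime `p` is the lexicographic minimum of the exponent vectors at `p` of elements of
`D`; moreover the support of `γ` is the intersection of the supports of the elements of
`D`. -/
theorem gamma_exists_unique (n : ℕ) (D : Set (Fin n → ℕ+)) (hD : D.Nonempty) :
    ∃ γ : Fin n → ℕ+,
      (∀ p : ℕ, p.Prime →
        IsLeast {x : Lex (Fin n → ℕ) | ∃ d ∈ D, x = toLex fun i => padicValNat p ((d i : ℕ))}
          (toLex fun i => padicValNat p ((γ i : ℕ)))) ∧
      (∀ γ' : Fin n → ℕ+,
        (∀ p : ℕ, p.Prime →
          IsLeast {x : Lex (Fin n → ℕ) | ∃ d ∈ D, x = toLex fun i => padicValNat p ((d i : ℕ))}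
            (toLex fun i => padicValNat p ((γ' i : ℕ)))) → γ' = γ) ∧
      PSupp γ = ⋂ d ∈ D, PSupp d := by
  classical
  obtain ⟨d0, hd0⟩ := hD
  set S : ℕ → Set (Lex (Fin n → ℕ)) := fun p =>
    {x | ∃ d ∈ D, x = toLex fun i => padicValNat p ((d i : ℕ))} with hS
  have hSne : ∀ p, (S p).Nonempty := fun p => ⟨_, d0, hd0, rfl⟩
  have htri : IsTrichotomous (Lex (Fin n → ℕ)) (· < ·) :=
    Pi.isTrichotomous_lex _ _
      (IsWellFounded.wf : WellFounded ((· < ·) : Fin n → Fin n → Prop))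
  have hleast : ∀ p, ∃ x, IsLeast (S p) x := by
    intro p
    obtain ⟨x, hx, hmin⟩ :=
      (IsWellFounded.wf (r := ((· < ·) : Lex (Fin n → ℕ) → Lex (Fin n → ℕ) → Prop))).has_min
        (S p) (hSne p)
    refine ⟨x, hx, fun y hy => ?_⟩
    rcases (haveI := htri; trichotomous (r := (· < ·)) x y) with h | h | h
    · exact le_of_lt h
    · exact le_of_eq h
    · exact absurd h (hmin y hy)
  choose m hm using hleast
  have hzero : ∀ x : Lex (Fin n → ℕ), (toLex fun _ => (0 : ℕ)) ≤ x := by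
    intro x
    rcases (haveI := htri; trichotomous (r := (· < ·)) (toLex fun _ => (0 : ℕ)) x) with h | h | h
    · exact le_of_lt h
    · exact le_of_eq h
    · obtain ⟨i, -, hi⟩ := h
      exact absurd hi (Nat.not_lt_zero _)
  -- if some element of `D` has zero exponent vector at `p`, then `m p` is zero
  have hbot : ∀ p : ℕ, ∀ d ∈ D, (∀ j, ¬ (p ∣ (d j : ℕ))) → m p = toLex fun _ => (0 : ℕ) := by
    intro p d hd hp
    have h1 : (fun i => padicValNat p ((d i : ℕ))) = fun _ => (0 : ℕ) := by
      funext i; exact padicValNat.eq_zero_of_not_dvd (hp i)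
    have hle : m p ≤ toLex fun _ => (0 : ℕ) := by
      have h0 := (hm p).2 ⟨d, hd, rfl⟩
      rwa [h1] at h0
    exact le_antisymm hle (hzero _)
  -- the exponent functions have finite support
  have hgfin : ∀ i : Fin n,
      (Function.support fun p : ℕ => if p.Prime then ofLex (m p) i else 0).Finite := by
    intro i
    apply Set.Finite.subset
      (Set.finite_iUnion (fun j : Fin n => ((d0 j : ℕ).primeFactors : Set ℕ).toFinite))
    intro p hp
    simp only [Function.mem_support] at hp
    by_cases hpp : p.Prime
    · rw [Set.mem_iUnion]
      by_contra hcon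
      push_neg at hcon
      have hnd : ∀ j, ¬ (p ∣ (d0 j : ℕ)) := fun j hdvd =>
        hcon j (by simpa using Nat.mem_primeFactors.2 ⟨hpp, hdvd, (d0 j).pos.ne'⟩)
      rw [hbot p d0 hd0 hnd] at hp
      simp [hpp] at hp
    · simp [hpp] at hp
  set f : Fin n → ℕ →₀ ℕ := fun i =>
    Finsupp.ofSupportFinite (fun p : ℕ => if p.Prime then ofLex (m p) i else 0) (hgfin i) with hf
  have hfapp : ∀ i p, f i p = if p.Prime then ofLex (m p) i else 0 := fun i p => rfl
  have hfsupp : ∀ i, ∀ p ∈ (f i).support, Nat.Prime p := by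
    intro i p hp
    rw [Finsupp.mem_support_iff, hfapp] at hp
    by_contra h
    simp [h] at hp
  have hpos : ∀ i, 0 < (f i).prod (· ^ ·) := by
    intro i
    apply Nat.pos_of_ne_zero
    rw [Finsupp.prod, Finset.prod_ne_zero_iff]
    intro p hp
    exact pow_ne_zero _ (hfsupp i p hp).pos.ne'
  set γ : Fin n → ℕ+ := fun i => ⟨(f i).prod (· ^ ·), hpos i⟩ with hγ
  have hfact : ∀ i, ((γ i : ℕ)).factorization = f i := fun i =>
    Nat.prod_pow_factorization_eq_self (hfsupp i)
  have hval : ∀ p : ℕ, p.Prime → ∀ i, padicValNat p ((γ i : ℕ)) = ofLex (m p) i := by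
    intro p hp i
    rw [← Nat.factorization_def _ hp, hfact, hfapp, if_pos hp]
  have hkey : ∀ p : ℕ, p.Prime → (toLex fun i => padicValNat p ((γ i : ℕ))) = m p := by
    intro p hp
    have h1 : (fun i => padicValNat p ((γ i : ℕ))) = ofLex (m p) :=
      funext fun i => hval p hp i
    rw [h1]
    exact toLex_ofLex (m p)
  refine ⟨γ, ?_, ?_, ?_⟩
  · intro p hp
    rw [hkey p hp]
    exact hm p
  · intro γ' hγ'
    funext i
    have hni : ∀ p : ℕ, p.Prime → padicValNat p ((γ' i : ℕ)) = padicValNat p ((γ i : ℕ)) := by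
      intro p hp
      have h := (hγ' p hp).unique (hm p)
      have h2 : (toLex fun j => padicValNat p ((γ' j : ℕ)))
          = (toLex fun j => padicValNat p ((γ j : ℕ))) := h.trans (hkey p hp).symm
      exact congrFun (toLex_inj.mp h2) i
    exact PNat.coe_injective
      ((Nat.eq_iff_prime_padicValNat_eq _ _ (γ' i).pos.ne' (γ i).pos.ne').2 hni)
  · ext p
    simp only [PSupp, Set.mem_setOf_eq, Set.mem_iInter]
    constructor
    · rintro ⟨hp, i, hdvd⟩ d hd
      refine ⟨hp, ?_⟩
      by_contra hcon
      push_neg at hcon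
      have hmb := hbot p d hd fun j => hcon j
      have h1 : padicValNat p ((γ i : ℕ)) ≠ 0 := by
        rw [← Nat.factorization_def _ hp]
        exact Nat.one_le_iff_ne_zero.1
          ((Nat.Prime.dvd_iff_one_le_factorization hp (γ i).pos.ne').1 hdvd)
      rw [hval p hp i, hmb] at h1
      simp at h1
    · intro h
      have hp := (h d0 hd0).1
      obtain ⟨d, hd, hmd⟩ := (hm p).1
      obtain ⟨-, j, hdvd⟩ := h d hd
      refine ⟨hp, j, ?_⟩
      rw [Nat.Prime.dvd_iff_one_le_factorization hp (γ j).pos.ne',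
        Nat.factorization_def _ hp, hval p hp j, hmd]
      show 1 ≤ padicValNat p ((d j : ℕ))
      rw [← Nat.factorization_def _ hp]
      exact (Nat.Prime.dvd_iff_one_le_factorization hp (d j).pos.ne').1 hdvd
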